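/- Let Ψ be a vector in the bipartite Hilbert space H = EuclideanSpace ℂ (Fin m × Fin n) and let a ∈ EuclideanSpace ℂ (Fin m) be a unit vector. Define φ ∈ EuclideanSpace ℂ (Fin n) by φ k = ⟨a⊗e_k, Ψ⟩. Then: (i) for every unit vector b ∈ EuclideanSpace ℂ (Fin n), |⟨a⊗b, Ψ⟩| ≤ ‖φ‖; (ii) if φ ≠ 0, the bound is attained at b = ‖φ‖⁻¹ • φ; and (iii) ‖φ‖² = Σ_{k ∈ Fin n} |⟨a⊗e_k, Ψ⟩|². (The backward-iteration step: the optimal second component is proportional to the contraction ⟨a, ·|Ψ⟩.) -/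

import Mathlib

open scoped ComplexInnerProductSpace

/-- The product vector `a ⊗ b` in the bipartite space, `(a ⊗ b)(i, k) = a i * b k`. -/
noncomputable def tp {m n : ℕ} (a : EuclideanSpace ℂ (Fin m)) (b : EuclideanSpace ℂ (Fin n)) :
    EuclideanSpace ℂ (Fin m × Fin n) :=
  WithLp.toLp 2 (fun p : Fin m × Fin n => a p.1 * b p.2)

/-- The contraction identity: `⟪a⊗b, Ψ⟫ = ⟪b, φ⟫` where `φ k = ⟪a⊗e_k, Ψ⟫`. -/
lemma tp_inner_key {m n : ℕ} (Ψ : EuclideanSpace ℂ (Fin m × Fin n))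
    (a : EuclideanSpace ℂ (Fin m)) (φ : EuclideanSpace ℂ (Fin n))
    (hφ : ∀ k : Fin n, φ k = ⟪tp a (EuclideanSpace.single k 1), Ψ⟫)
    (b : EuclideanSpace ℂ (Fin n)) : ⟪tp a b, Ψ⟫ = ⟪b, φ⟫ := by
  have htp : tp a b = ∑ k, b k • tp a (EuclideanSpace.single k 1) := by
    ext p
    have : (∑ k, b k • tp a (EuclideanSpace.single k 1)) p
        = ∑ k, b k * (a p.1 * (EuclideanSpace.single k 1 : EuclideanSpace ℂ (Fin n)) p.2) := by
      rw [WithLp.ofLp_sum, Finset.sum_apply]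
      rfl
    rw [this]
    simp [tp, EuclideanSpace.single_apply, mul_ite, Finset.sum_ite_eq', mul_comm]
  rw [htp, sum_inner]
  simp_rw [inner_smul_left]
  simp [PiLp.inner_apply, hφ, RCLike.inner_apply, mul_comm]

/-- **Backward-iteration step.**  For `Ψ` in the bipartite space and a unit vector `a`,
let `φ k = ⟨a⊗e_k, Ψ⟩` be the contraction `⟨a, ⋅|Ψ⟩`.  Then (i) for every unit vector `b`,
`|⟨a⊗b, Ψ⟩| ≤ ‖φ‖`; (ii) if `φ ≠ 0` the bound is attained at `b = ‖φ‖⁻¹ • φ`; and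
(iii) `‖φ‖² = Σ_k |⟨a⊗e_k, Ψ⟩|²`. -/
theorem backward_step {m n : ℕ} (hm : 1 ≤ m) (hn : 1 ≤ n)
    (Ψ : EuclideanSpace ℂ (Fin m × Fin n))
    (a : EuclideanSpace ℂ (Fin m)) (ha : ‖a‖ = 1)
    (φ : EuclideanSpace ℂ (Fin n))
    (hφ : ∀ k : Fin n, φ k = ⟪tp a (EuclideanSpace.single k 1), Ψ⟫) :
    (∀ b : EuclideanSpace ℂ (Fin n), ‖b‖ = 1 → ‖⟪tp a b, Ψ⟫‖ ≤ ‖φ‖) ∧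
    (φ ≠ 0 → ‖⟪tp a ((‖φ‖ : ℝ)⁻¹ • φ), Ψ⟫‖ = ‖φ‖) ∧
    ‖φ‖ ^ 2 = ∑ k : Fin n, ‖⟪tp a (EuclideanSpace.single k 1), Ψ⟫‖ ^ 2 := by
  refine ⟨fun b hb => ?_, fun h0 => ?_, ?_⟩
  · rw [tp_inner_key Ψ a φ hφ b]
    calc ‖⟪b, φ⟫‖ ≤ ‖b‖ * ‖φ‖ := norm_inner_le_norm b φ
    _ = ‖φ‖ := by rw [hb, one_mul]
  · rw [tp_inner_key Ψ a φ hφ]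
    have hφ0 : ‖φ‖ ≠ 0 := norm_ne_zero_iff.mpr h0
    rw [RCLike.real_smul_eq_coe_smul (K := ℂ), inner_smul_left, inner_self_eq_norm_sq_to_K,
      norm_mul]
    simp [pow_two, hφ0]
  · simp_rw [← hφ]
    rw [EuclideanSpace.norm_eq, Real.sq_sqrt (Finset.sum_nonneg fun k _ => sq_nonneg _)]
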